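/- arXiv:1910.09817 — 5 statements merged into one kernel-verified Lean document; each statement's English description precedes it below -/
import Mathlib

section
/- Let x* ∈ ℝ^d. Then x* is a minimizer of F + G over ℝ^d if and only if the matrix 1_m (x*)ᵀ ∈ ℝ^{m×d} (all rows equal to x*) belongs to S_KKT; that is, if and only if there exists Y ∈ ℝ^{m×d} such that √C · (1_m (x*)ᵀ) = 0 and, for each i = 1,…,m, the i-th row v_i of the matrix −(∇f(1_m (x*)ᵀ) + √C Y) is a subgradient of G at x*, i.e. G(u) ≥ G(x*) + ⟨v_i, u − x*⟩ for all u ∈ ℝ^d. -/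
open Matrix

/-- Squared Euclidean norm of a vector in ℝ^d. -/
noncomputable def vecNormSq {d : ℕ} (v : Fin d → ℝ) : ℝ := ∑ j, v j ^ 2

/-- The continuous linear map `u ↦ ⟨v, u⟩` on ℝ^d (used to state that `v` is a gradient). -/
noncomputable def dotCLM {d : ℕ} (v : Fin d → ℝ) : (Fin d → ℝ) →L[ℝ] ℝ :=
  LinearMap.toContinuousLinearMap
    (∑ j, v j • (LinearMap.proj j : (Fin d → ℝ) →ₗ[ℝ] ℝ))

/-- Squared Frobenius norm. -/
noncomputable def frobSq {m d : ℕ} (X : Matrix (Fin m) (Fin d) ℝ) : ℝ :=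
  ∑ i, ∑ j, X i j ^ 2

/-- Frobenius inner product `⟨X, Y⟩_F = trace(Xᵀ Y)`. -/
noncomputable def frobInner {m d : ℕ} (X Y : Matrix (Fin m) (Fin d) ℝ) : ℝ :=
  ∑ i, ∑ j, X i j * Y i j

/-- All ones vector `1_m`. -/
def onesV (m : ℕ) : Fin m → ℝ := fun _ => 1

/-- The consensus matrix `1_m xᵀ` (all rows equal to `x`). -/
def consMat (m : ℕ) {d : ℕ} (x : Fin d → ℝ) : Matrix (Fin m) (Fin d) ℝ :=
  Matrix.of fun _ j => x j

/-- The matrix `∇f(X)` whose `i`-th row is `∇f_i(x_i)`. -/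
noncomputable def gradMat {m d : ℕ} (gradf : Fin m → (Fin d → ℝ) → (Fin d → ℝ))
    (X : Matrix (Fin m) (Fin d) ℝ) : Matrix (Fin m) (Fin d) ℝ :=
  Matrix.of fun i j => gradf i (X i) j

/-- `v` is a subgradient of the extended-valued convex function `G` at `x`. -/
def IsSubgradAt {d : ℕ} (G : (Fin d → ℝ) → EReal) (v x : Fin d → ℝ) : Prop :=
  ∀ u : Fin d → ℝ, G x + (((∑ j, v j * (u j - x j)) : ℝ) : EReal) ≤ G u

/-- Convexity for an extended-real-valued function. -/
def ERealConvexOn {d : ℕ} (G : (Fin d → ℝ) → EReal) : Prop :=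
  ∀ x y : Fin d → ℝ, ∀ a b : ℝ, 0 ≤ a → 0 ≤ b → a + b = 1 →
    G (a • x + b • y) ≤ (a : EReal) * G x + (b : EReal) * G y

/-- `G` is proper: never `⊥` and finite somewhere. -/
def GProper {d : ℕ} (G : (Fin d → ℝ) → EReal) : Prop :=
  (∀ x, G x ≠ ⊥) ∧ (∃ x, G x ≠ ⊤)

/-- `g(X) = Σ_i G(x_i)`. -/
noncomputable def gSum {m d : ℕ} (G : (Fin d → ℝ) → EReal)
    (X : Matrix (Fin m) (Fin d) ℝ) : EReal :=
  ∑ i, G (X i)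

/-- Objective of the proximal subproblem `Y ↦ g(Y) + (1/(2γ))‖Y − Z‖²_F`. -/
noncomputable def proxObj {m d : ℕ} (G : (Fin d → ℝ) → EReal) (γ : ℝ)
    (Z Y : Matrix (Fin m) (Fin d) ℝ) : EReal :=
  gSum G Y + (((1 / (2 * γ) * frobSq (Y - Z)) : ℝ) : EReal)

/-- `P` is the unique minimizer of the proximal subproblem, i.e. `P = prox_{γ g}(Z)`. -/
def IsProx {m d : ℕ} (G : (Fin d → ℝ) → EReal) (γ : ℝ)
    (Z P : Matrix (Fin m) (Fin d) ℝ) : Prop :=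
  (∀ Y, proxObj G γ Z P ≤ proxObj G γ Z Y) ∧
  (∀ Y, (∀ Y', proxObj G γ Z Y ≤ proxObj G γ Z Y') → Y = P)

/-- Largest eigenvalue of a symmetric matrix, via the Rayleigh quotient. -/
noncomputable def lamMax {m : ℕ} (P : Matrix (Fin m) (Fin m) ℝ) : ℝ :=
  sSup {r : ℝ | ∃ z : Fin m → ℝ, vecNormSq z = 1 ∧ r = z ⬝ᵥ (P *ᵥ z)}

/-- Smallest eigenvalue of a symmetric matrix, via the Rayleigh quotient. -/
noncomputable def lamMin {m : ℕ} (P : Matrix (Fin m) (Fin m) ℝ) : ℝ :=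
  sInf {r : ℝ | ∃ z : Fin m → ℝ, vecNormSq z = 1 ∧ r = z ⬝ᵥ (P *ᵥ z)}

/-- Second-smallest eigenvalue `λ₂(C) = min{⟨z, Cz⟩ : ‖z‖ = 1, 1ᵀz = 0}`. -/
noncomputable def lam2 {m : ℕ} (C : Matrix (Fin m) (Fin m) ℝ) : ℝ :=
  sInf {r : ℝ | ∃ z : Fin m → ℝ, vecNormSq z = 1 ∧ (∑ i, z i) = 0 ∧ r = z ⬝ᵥ (C *ᵥ z)}

/-- Square root of a positive semidefinite matrix (the definition removed from Mathlib). -/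
noncomputable def Matrix.PosSemidef.sqrt {n : Type*} [Fintype n] [DecidableEq n]
    {A : Matrix n n ℝ} (hA : A.PosSemidef) : Matrix n n ℝ :=
  hA.1.eigenvectorUnitary * diagonal ((√·) ∘ hA.1.eigenvalues) *
    (star hA.1.eigenvectorUnitary : Matrix n n ℝ)

private lemma sqrt_isHermitian' {m : ℕ} {C : Matrix (Fin m) (Fin m) ℝ} (hC : C.PosSemidef) :
    hC.sqrt.IsHermitian := by
  unfold Matrix.PosSemidef.sqrt
  rw [IsHermitian, conjTranspose_mul, conjTranspose_mul, diagonal_conjTranspose]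
  simp [Matrix.mul_assoc, Matrix.star_eq_conjTranspose]

private lemma sqrt_mul_self' {m : ℕ} {C : Matrix (Fin m) (Fin m) ℝ} (hC : C.PosSemidef) :
    hC.sqrt * hC.sqrt = C := by
  unfold Matrix.PosSemidef.sqrt
  set U := hC.1.eigenvectorUnitary with hUdef
  have hU : (star U : Matrix (Fin m) (Fin m) ℝ) * (U : Matrix (Fin m) (Fin m) ℝ) = 1 :=
    Unitary.coe_star_mul_self U
  set D := diagonal ((√·) ∘ hC.1.eigenvalues)
  rw [show (U : Matrix (Fin m) (Fin m) ℝ) * D * (star U : Matrix (Fin m) (Fin m) ℝ) *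
      ((U : Matrix (Fin m) (Fin m) ℝ) * D * (star U : Matrix (Fin m) (Fin m) ℝ))
      = U * (D * ((star U : Matrix (Fin m) (Fin m) ℝ) * U) * D) * (star U : Matrix (Fin m) (Fin m) ℝ) by
      simp only [Matrix.mul_assoc], hU, Matrix.mul_one, diagonal_mul_diagonal]
  conv_rhs => rw [hC.1.spectral_theorem, Unitary.conjStarAlgAut_apply]
  congr 3
  funext i
  simp [Real.mul_self_sqrt (hC.eigenvalues_nonneg i)]


section StmtZeroHelpers

private lemma dotCLM_apply' {d : ℕ} (v w : Fin d → ℝ) : dotCLM v w = ∑ j, v j * w j := by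
  simp [dotCLM]

private lemma line_deriv' {d : ℕ} {φ : (Fin d → ℝ) → ℝ} {v x : Fin d → ℝ} (w : Fin d → ℝ)
    (h : HasFDerivAt φ (dotCLM v) x) :
    HasDerivAt (fun t : ℝ => φ (x + t • w)) (∑ j, v j * w j) 0 := by
  have hγ : HasDerivAt (fun t : ℝ => x + t • w) w 0 := by
    simpa using (((hasDerivAt_id (0:ℝ)).smul_const w).const_add x)
  have h' : HasFDerivAt φ (dotCLM v) (x + (0:ℝ) • w) := by simpa using h
  have := h'.comp_hasDerivAt 0 hγ
  simpa [dotCLM_apply', Function.comp_def] using this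

private lemma deriv_le_of_slope_le' {φ : ℝ → ℝ} {D c : ℝ} (hD : HasDerivAt φ D 0)
    (h : ∀ t ∈ Set.Ioc (0:ℝ) 1, (φ t - φ 0) / t ≤ c) : D ≤ c := by
  have ht : Filter.Tendsto (slope φ 0) (nhdsWithin 0 (Set.Ioi 0)) (nhds D) :=
    (hasDerivAt_iff_tendsto_slope.mp hD).mono_left
      (nhdsWithin_mono _ (fun t ht => by simpa using ne_of_gt ht))
  refine le_of_tendsto ht ?_
  filter_upwards [Ioc_mem_nhdsGT_of_mem (by constructor <;> norm_num : (0:ℝ) ∈ Set.Ico 0 1)]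
    with t ht2
  simpa [slope, div_eq_inv_mul] using h t ht2

private lemma deriv_ge_of_slope_ge' {φ : ℝ → ℝ} {D c : ℝ} (hD : HasDerivAt φ D 0)
    (h : ∀ t ∈ Set.Ioc (0:ℝ) 1, c ≤ (φ t - φ 0) / t) : c ≤ D := by
  have ht : Filter.Tendsto (slope φ 0) (nhdsWithin 0 (Set.Ioi 0)) (nhds D) :=
    (hasDerivAt_iff_tendsto_slope.mp hD).mono_left
      (nhdsWithin_mono _ (fun t ht => by simpa using ne_of_gt ht))
  refine ge_of_tendsto ht ?_
  filter_upwards [Ioc_mem_nhdsGT_of_mem (by constructor <;> norm_num : (0:ℝ) ∈ Set.Ico 0 1)]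
    with t ht2
  simpa [slope, div_eq_inv_mul] using h t ht2

private lemma convexOn_vecNormSq' {d : ℕ} : ConvexOn ℝ Set.univ (vecNormSq (d := d)) := by
  have h1 : ∀ j : Fin d, ConvexOn ℝ Set.univ (fun v : Fin d → ℝ => v j ^ 2) := by
    intro j
    have := (Even.convexOn_pow (even_two) : ConvexOn ℝ Set.univ fun x : ℝ => x ^ 2).comp_linearMap
      (LinearMap.proj j : (Fin d → ℝ) →ₗ[ℝ] ℝ)
    simpa [Function.comp_def] using this
  have h2 : ∀ s : Finset (Fin d), ConvexOn ℝ Set.univ (fun v : Fin d → ℝ => ∑ j ∈ s, v j ^ 2) := by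
    intro s
    induction s using Finset.induction with
    | empty => simpa using convexOn_const (0:ℝ) convex_univ
    | insert _ _ hx ih =>
      simp only [Finset.sum_insert hx]
      exact (h1 _).add ih
  exact h2 Finset.univ

private lemma convex_of_sc' {d : ℕ} {μ : ℝ} (hμ : 0 < μ) {f : (Fin d → ℝ) → ℝ}
    (h : ConvexOn ℝ Set.univ fun x => f x - μ / 2 * vecNormSq x) :
    ConvexOn ℝ Set.univ f := by
  have h2 : ConvexOn ℝ Set.univ fun x : Fin d → ℝ => μ / 2 * vecNormSq x := by
    have := convexOn_vecNormSq' (d := d).smul (le_of_lt (by positivity : (0:ℝ) < μ/2))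
    simpa [smul_eq_mul] using this
  have h3 := h.add h2
  have h4 : ((fun x => f x - μ / 2 * vecNormSq x) + fun x : Fin d → ℝ => μ / 2 * vecNormSq x) = f := by
    funext x; simp
  rwa [h4] at h3

private lemma grad_ineq'' {d : ℕ} {f : (Fin d → ℝ) → ℝ} {gradf : (Fin d → ℝ) → (Fin d → ℝ)}
    (hconv : ConvexOn ℝ Set.univ f) (hdiff : ∀ x, HasFDerivAt f (dotCLM (gradf x)) x)
    (x u : Fin d → ℝ) :
    f x + ∑ j, gradf x j * (u j - x j) ≤ f u := by
  have hD := line_deriv' (u - x) (hdiff x)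
  have hle : (∑ j, gradf x j * (u - x) j) ≤ f u - f x := by
    refine deriv_le_of_slope_le' hD ?_
    intro t ht
    have hxt : x + t • (u - x) = (1 - t) • x + t • u := by
      funext j
      simp only [Pi.add_apply, Pi.smul_apply, Pi.sub_apply, smul_eq_mul]
      ring
    have hcv := hconv.2 (Set.mem_univ x) (Set.mem_univ u)
      (by linarith [ht.2] : (0:ℝ) ≤ 1 - t) (le_of_lt ht.1) (by ring)
    rw [← hxt] at hcv
    simp only [smul_eq_mul] at hcv
    have h0 : x + (0:ℝ) • (u - x) = x := by simp
    rw [div_le_iff₀ ht.1, h0]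
    nlinarith
  have heq : (∑ j, gradf x j * (u - x) j) = ∑ j, gradf x j * (u j - x j) :=
    Finset.sum_congr rfl fun j _ => by simp
  linarith [heq ▸ hle]

private lemma exists_solution' {m : ℕ} (hm : 0 < m) (A : Matrix (Fin m) (Fin m) ℝ)
    (hsymm : Aᵀ = A) (hker : ∀ z, A *ᵥ z = 0 ↔ ∃ c : ℝ, z = fun _ => c)
    (w : Fin m → ℝ) (hw : ∑ i, w i = 0) : ∃ y, A *ᵥ y = w := by
  classical
  set T := A.mulVecLin with hT
  set s : ((Fin m → ℝ) →ₗ[ℝ] ℝ) := ∑ i, (LinearMap.proj i : (Fin m → ℝ) →ₗ[ℝ] ℝ) with hs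
  have hs_apply : ∀ z : Fin m → ℝ, s z = ∑ i, z i := by
    intro z; simp [hs]
  have hA1 : A *ᵥ (fun _ => (1:ℝ)) = 0 := (hker _).mpr ⟨1, rfl⟩
  have hle : LinearMap.range T ≤ LinearMap.ker s := by
    rintro _ ⟨z, rfl⟩
    simp only [LinearMap.mem_ker]
    rw [hs_apply]
    have hcol : ∀ k, ∑ i, A i k = 0 := by
      intro k
      have h1 := congrFun hA1 k
      simp only [mulVec, dotProduct, mul_one, Pi.zero_apply] at h1
      calc ∑ i, A i k = ∑ i, A k i := by
            refine Finset.sum_congr rfl fun i _ => ?_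
            conv_lhs => rw [← hsymm]
            rfl
        _ = 0 := h1
    calc ∑ i, T z i = ∑ i, ∑ k, A i k * z k := by
          refine Finset.sum_congr rfl fun i _ => ?_
          simp [hT, mulVec, dotProduct]
      _ = ∑ k, (∑ i, A i k) * z k := by
          rw [Finset.sum_comm]; simp [Finset.sum_mul]
      _ = 0 := by simp [hcol]
  have hone : (fun _ => (1:ℝ)) ≠ (0 : Fin m → ℝ) := by
    intro h; exact one_ne_zero (congrFun h ⟨0, hm⟩)
  have hkerT : LinearMap.ker T = Submodule.span ℝ {(fun _ => (1:ℝ) : Fin m → ℝ)} := by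
    ext z
    simp only [LinearMap.mem_ker, Submodule.mem_span_singleton]
    rw [show T z = A *ᵥ z from rfl, hker]
    constructor
    · rintro ⟨c, rfl⟩; exact ⟨c, by funext i; simp⟩
    · rintro ⟨c, rfl⟩; exact ⟨c, by funext i; simp⟩
  have hkerT_rank : Module.finrank ℝ (LinearMap.ker T) = 1 := by
    rw [hkerT]; exact finrank_span_singleton hone
  have hrangeT_rank : Module.finrank ℝ (LinearMap.range T) + 1 = m := by
    have := LinearMap.finrank_range_add_finrank_ker T
    rw [hkerT_rank] at this
    simpa using this
  have hkers_rank : Module.finrank ℝ (LinearMap.ker s) + 1 = m := by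
    have hsur : Function.Surjective s := by
      intro r
      refine ⟨(r / m) • (fun _ => (1:ℝ)), ?_⟩
      rw [hs_apply]
      simp only [Pi.smul_apply, smul_eq_mul, mul_one, Finset.sum_const, Finset.card_univ,
        Fintype.card_fin, nsmul_eq_mul]
      field_simp
    have h5 := LinearMap.finrank_range_add_finrank_ker s
    rw [LinearMap.range_eq_top.mpr hsur] at h5
    simp only [finrank_top] at h5
    rw [Module.finrank_self ℝ] at h5
    simpa [add_comm] using h5
  have heq : LinearMap.range T = LinearMap.ker s :=
    Submodule.eq_of_le_of_finrank_le hle (by omega)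
  have hwmem : w ∈ LinearMap.ker s := by rw [LinearMap.mem_ker, hs_apply]; exact hw
  rw [← heq] at hwmem
  obtain ⟨y, hy⟩ := hwmem
  exact ⟨y, hy⟩

private lemma sqrt_ones' {m : ℕ} {C : Matrix (Fin m) (Fin m) ℝ} (hC : C.PosSemidef)
    (hC1 : C *ᵥ (fun _ => (1:ℝ)) = 0) :
    hC.sqrt *ᵥ (fun _ => (1:ℝ)) = 0 := by
  classical
  set S := hC.sqrt with hS
  set z := S *ᵥ (fun _ => (1:ℝ)) with hz
  have hsymm : ∀ i k, S i k = S k i := fun i k => (sqrt_isHermitian' hC).apply k i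
  have hSz : S *ᵥ z = 0 := by
    rw [hz, mulVec_mulVec, sqrt_mul_self' hC, hC1]
  have h0 : ∑ k, z k ^ 2 = 0 := by
    calc ∑ k, z k ^ 2 = ∑ k, (∑ i, S k i) * z k := by
          refine Finset.sum_congr rfl fun k _ => ?_
          have hzk : z k = ∑ i, S k i := by simp [hz, mulVec, dotProduct]
          rw [hzk]; ring
      _ = ∑ k, ∑ i, S k i * z k := by
          refine Finset.sum_congr rfl fun k _ => ?_; rw [Finset.sum_mul]
      _ = ∑ i, ∑ k, S i k * z k := by
          rw [Finset.sum_comm]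
          exact Finset.sum_congr rfl fun i _ => Finset.sum_congr rfl fun k _ => by rw [hsymm]
      _ = ∑ i, (S *ᵥ z) i := by
          refine Finset.sum_congr rfl fun i _ => ?_; simp [mulVec, dotProduct]
      _ = 0 := by rw [hSz]; simp
  funext k
  have hk : z k ^ 2 = 0 :=
    Finset.sum_eq_zero_iff_of_nonneg (fun i _ => sq_nonneg (z i)) |>.mp h0 k (Finset.mem_univ k)
  simpa using sq_eq_zero_iff.mp hk

private lemma ereal_exists_real' {x : EReal} (ht : x ≠ ⊤) (hb : x ≠ ⊥) : ∃ r : ℝ, x = r := by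
  lift x to ℝ using ⟨ht, hb⟩ with r
  exact ⟨r, rfl⟩

end StmtZeroHelpers

/-- `x*` minimizes `F + G` iff `1_m (x*)ᵀ ∈ S_KKT`. -/
theorem stmt_0 {m d : ℕ} (hm : 0 < m) (μ L : ℝ) (hμ : 0 < μ) (hμL : μ ≤ L)
    (f : Fin m → (Fin d → ℝ) → ℝ) (gradf : Fin m → (Fin d → ℝ) → (Fin d → ℝ))
    (hdiff : ∀ i x, HasFDerivAt (f i) (dotCLM (gradf i x)) x)
    (hsc : ∀ i, ConvexOn ℝ Set.univ fun x => f i x - μ / 2 * vecNormSq x)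
    (hsmooth : ∀ i x y, vecNormSq (gradf i x - gradf i y) ≤ L ^ 2 * vecNormSq (x - y))
    (G : (Fin d → ℝ) → EReal) (hGp : GProper G) (hGc : ERealConvexOn G)
    (hGl : LowerSemicontinuous G)
    (C : Matrix (Fin m) (Fin m) ℝ) (hC : C.PosSemidef)
    (hnull : ∀ z : Fin m → ℝ, C *ᵥ z = 0 ↔ ∃ c : ℝ, z = fun _ => c)
    (xstar : Fin d → ℝ) :
    (∀ u : Fin d → ℝ,
        ((((1 / (m : ℝ)) * ∑ i, f i xstar) : ℝ) : EReal) + G xstar ≤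
          ((((1 / (m : ℝ)) * ∑ i, f i u) : ℝ) : EReal) + G u) ↔
      ∃ Y : Matrix (Fin m) (Fin d) ℝ,
        hC.sqrt * consMat m xstar = 0 ∧
        ∀ i : Fin m,
          IsSubgradAt G ((-(gradMat gradf (consMat m xstar) + hC.sqrt * Y)) i) xstar := by
    classical
  set S := hC.sqrt with hSdef
  have hmR : (0:ℝ) < m := by exact_mod_cast hm
  have hC1 : C *ᵥ (fun _ => (1:ℝ)) = 0 := (hnull _).mpr ⟨1, rfl⟩
  have hS1 : S *ᵥ (fun _ => (1:ℝ)) = 0 := sqrt_ones' hC hC1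
  have hSsymm : ∀ i k, S i k = S k i := fun i k => (sqrt_isHermitian' hC).apply k i
  have hScol : ∀ k, ∑ i, S i k = 0 := by
    intro k
    have h1 := congrFun hS1 k
    simp only [mulVec, dotProduct, mul_one, Pi.zero_apply] at h1
    calc ∑ i, S i k = ∑ i, S k i := Finset.sum_congr rfl fun i _ => hSsymm i k
      _ = 0 := h1
  constructor
  · intro hmin
    obtain ⟨x0, hx0⟩ := hGp.2
    obtain ⟨s0, hs0⟩ := ereal_exists_real' hx0 (hGp.1 x0)
    have hnt : G xstar ≠ ⊤ := by
      intro htop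
      have h0 := hmin x0
      rw [htop, hs0, EReal.coe_add_top, ← EReal.coe_add] at h0
      exact EReal.coe_ne_top _ (top_le_iff.mp h0)
    obtain ⟨g, hg⟩ := ereal_exists_real' hnt (hGp.1 xstar)
    set v : Fin d → ℝ := fun j => -((1/(m:ℝ)) * ∑ i, gradf i xstar j) with hv
    have hsub : IsSubgradAt G v xstar := by
      intro u
      by_cases hu : G u = ⊤
      · rw [hu]; exact le_top
      obtain ⟨s, hsu⟩ := ereal_exists_real' hu (hGp.1 u)
      set w : Fin d → ℝ := u - xstar with hw
      set D : ℝ := (1/(m:ℝ)) * ∑ i, ∑ j, gradf i xstar j * w j with hD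
      have hψ : HasDerivAt (fun t : ℝ => (1/(m:ℝ)) * ∑ i, f i (xstar + t • w)) D 0 := by
        refine HasDerivAt.const_mul _ ?_
        exact HasDerivAt.fun_sum (fun i _ => line_deriv' w (hdiff i xstar))
      have hkey : g - s ≤ D := by
        refine deriv_ge_of_slope_ge' hψ ?_
        intro t ht
        have hxt : xstar + t • w = (1 - t) • xstar + t • u := by
          funext j
          simp only [hw, Pi.add_apply, Pi.smul_apply, Pi.sub_apply, smul_eq_mul]
          ring
        have hGt : G (xstar + t • w) ≤ (((1 - t) * g + t * s : ℝ) : EReal) := by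
          rw [hxt]
          have hcv := hGc xstar u (1 - t) t (by linarith [ht.2]) (le_of_lt ht.1) (by ring)
          rw [hg, hsu] at hcv
          calc G ((1 - t) • xstar + t • u)
              ≤ ((1 - t : ℝ) : EReal) * (g : EReal) + ((t : ℝ) : EReal) * (s : EReal) := hcv
            _ = (((1 - t) * g + t * s : ℝ) : EReal) := by
                rw [← EReal.coe_mul, ← EReal.coe_mul, ← EReal.coe_add]
        have hnt2 : G (xstar + t • w) ≠ ⊤ := ne_top_of_le_ne_top (EReal.coe_ne_top _) hGt
        obtain ⟨r, hr⟩ := ereal_exists_real' hnt2 (hGp.1 _)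
        rw [hr] at hGt
        have hrle : r ≤ (1 - t) * g + t * s := EReal.coe_le_coe_iff.mp hGt
        have hm2 := hmin (xstar + t • w)
        rw [hg, hr, ← EReal.coe_add, ← EReal.coe_add] at hm2
        have hm3 := EReal.coe_le_coe_iff.mp hm2
        have h00 : xstar + (0:ℝ) • w = xstar := by simp
        rw [le_div_iff₀ ht.1]
        simp only [h00]
        nlinarith [hm3, hrle, ht.1]
      rw [hg, hsu]
      have h1D : D = ∑ j, ((1/(m:ℝ)) * ∑ i, gradf i xstar j) * (u j - xstar j) := by
        rw [hD, Finset.sum_comm, Finset.mul_sum]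
        refine Finset.sum_congr rfl fun j _ => ?_
        conv_rhs => rw [mul_assoc, Finset.sum_mul]
        rw [Finset.mul_sum, Finset.mul_sum]
        refine Finset.sum_congr rfl fun i _ => ?_
        simp only [hw, Pi.sub_apply]
      have hDv : ∑ j, v j * (u j - xstar j) = -D := by
        rw [h1D, ← Finset.sum_neg_distrib]
        refine Finset.sum_congr rfl fun j _ => ?_
        simp only [hv]; ring
      rw [hDv, ← EReal.coe_add, EReal.coe_le_coe_iff]
      linarith [hkey]
    have hYexists : ∀ j : Fin d, ∃ y : Fin m → ℝ,
        S *ᵥ y = fun i => (-(v j)) - gradf i xstar j := by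
      intro j
      apply exists_solution' hm S
      · ext i k
        exact hSsymm k i
      · intro z
        constructor
        · intro hz
          apply (hnull z).mp
          have hCz : C *ᵥ z = S *ᵥ (S *ᵥ z) := by
            rw [mulVec_mulVec, hSdef, sqrt_mul_self' hC]
          rw [hCz, hz, mulVec_zero]
        · rintro ⟨c, rfl⟩
          have hcz : (fun _ : Fin m => c) = c • (fun _ : Fin m => (1:ℝ)) := by
            funext i; simp
          rw [hcz, mulVec_smul, hS1, smul_zero]
      · have hsums : ∑ i, ((-(v j)) - gradf i xstar j)
            = (m:ℝ) * ((1/(m:ℝ)) * ∑ i, gradf i xstar j) - ∑ i, gradf i xstar j := by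
          rw [Finset.sum_sub_distrib, Finset.sum_const, Finset.card_univ, Fintype.card_fin,
            nsmul_eq_mul]
          simp only [hv, neg_neg]
        rw [hsums]
        field_simp
        ring
    choose ycol hycol using hYexists
    refine ⟨Matrix.of (fun k j => ycol j k), ?_, ?_⟩
    · ext i j
      have hrow : ∑ k, S i k = 0 := by
        have h1 := congrFun hS1 i
        simpa [mulVec, dotProduct] using h1
      show ∑ k, S i k * (consMat m xstar) k j = 0
      calc ∑ k, S i k * (consMat m xstar) k j = (∑ k, S i k) * xstar j := by
            rw [Finset.sum_mul]
            exact Finset.sum_congr rfl fun k _ => rfl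
        _ = 0 := by rw [hrow, zero_mul]
    · intro i
      have hrow_eq : (-(gradMat gradf (consMat m xstar) + S * (Matrix.of fun k j => ycol j k))) i = v := by
        funext j
        have hmul : (S * (Matrix.of fun k j => ycol j k)) i j = (S *ᵥ ycol j) i := by
          simp [Matrix.mul_apply, mulVec, dotProduct]
        show -(gradMat gradf (consMat m xstar) i j
            + (S * (Matrix.of fun k j => ycol j k)) i j) = v j
        rw [hmul, hycol j]
        show -(gradf i xstar j + ((-(v j)) - gradf i xstar j)) = v j
        ring
      rw [hrow_eq]
      exact hsub
  · rintro ⟨Y, hY0, hYsub⟩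
    intro u
    obtain ⟨x0, hx0⟩ := hGp.2
    have hnt : G xstar ≠ ⊤ := by
      intro htop
      have h0 := hYsub ⟨0, hm⟩ x0
      rw [htop, EReal.top_add_coe] at h0
      exact hx0 (top_le_iff.mp h0)
    obtain ⟨g, hg⟩ := ereal_exists_real' hnt (hGp.1 xstar)
    by_cases hu : G u = ⊤
    · rw [hu, EReal.coe_add_top]; exact le_top
    obtain ⟨s, hsu⟩ := ereal_exists_real' hu (hGp.1 u)
    rw [hg, hsu, ← EReal.coe_add, ← EReal.coe_add, EReal.coe_le_coe_iff]
    have hentry : ∀ (i : Fin m) (j : Fin d),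
        (-(gradMat gradf (consMat m xstar) + S * Y)) i j
          = -(gradf i xstar j + (S * Y) i j) := by
      intro i j; rfl
    have hsubr : ∀ i : Fin m,
        g + ∑ j, (-(gradf i xstar j + (S * Y) i j)) * (u j - xstar j) ≤ s := by
      intro i
      have h0 := hYsub i u
      rw [hg, hsu, ← EReal.coe_add] at h0
      have h1 := EReal.coe_le_coe_iff.mp h0
      exact h1
    have hsum1 : (m:ℝ) * g + ∑ i, ∑ j, (-(gradf i xstar j + (S * Y) i j)) * (u j - xstar j)
        ≤ (m:ℝ) * s := by
      have h2 := Finset.sum_le_sum (fun i (_ : i ∈ Finset.univ) => hsubr i)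
      rw [Finset.sum_add_distrib, Finset.sum_const, Finset.sum_const, Finset.card_univ,
        Fintype.card_fin, nsmul_eq_mul, nsmul_eq_mul] at h2
      exact h2
    have hSYsum : ∀ j, ∑ i, (S * Y) i j = 0 := by
      intro j
      calc ∑ i, (S * Y) i j = ∑ i, ∑ k, S i k * Y k j :=
            Finset.sum_congr rfl fun i _ => by simp [Matrix.mul_apply]
        _ = ∑ k, (∑ i, S i k) * Y k j := by
            rw [Finset.sum_comm]
            exact Finset.sum_congr rfl fun k _ => (Finset.sum_mul _ _ _).symm
        _ = 0 := by simp [hScol]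
    have hT : ∑ i, ∑ j, (-(gradf i xstar j + (S * Y) i j)) * (u j - xstar j)
        = -∑ i, ∑ j, gradf i xstar j * (u j - xstar j) := by
      calc ∑ i, ∑ j, (-(gradf i xstar j + (S * Y) i j)) * (u j - xstar j)
          = ∑ j, ∑ i, (-(gradf i xstar j + (S * Y) i j)) * (u j - xstar j) := Finset.sum_comm
        _ = ∑ j, ((∑ i, -(gradf i xstar j)) - ∑ i, (S * Y) i j) * (u j - xstar j) := by
            refine Finset.sum_congr rfl fun j _ => ?_
            rw [← Finset.sum_mul]
            congr 1
            rw [sub_eq_add_neg, ← Finset.sum_neg_distrib, ← Finset.sum_add_distrib]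
            exact Finset.sum_congr rfl fun i _ => by ring
        _ = ∑ j, (∑ i, -(gradf i xstar j)) * (u j - xstar j) := by
            refine Finset.sum_congr rfl fun j _ => ?_
            rw [hSYsum j, sub_zero]
        _ = ∑ j, ∑ i, -(gradf i xstar j * (u j - xstar j)) := by
            refine Finset.sum_congr rfl fun j _ => ?_
            rw [Finset.sum_mul]
            exact Finset.sum_congr rfl fun i _ => by ring
        _ = -∑ j, ∑ i, gradf i xstar j * (u j - xstar j) := by
            rw [← Finset.sum_neg_distrib]
            exact Finset.sum_congr rfl fun j _ => Finset.sum_neg_distrib _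
        _ = -∑ i, ∑ j, gradf i xstar j * (u j - xstar j) := by rw [Finset.sum_comm]
    have hgrad : ∑ i, f i xstar + ∑ i, ∑ j, gradf i xstar j * (u j - xstar j) ≤ ∑ i, f i u := by
      have h3 := Finset.sum_le_sum (fun i (_ : i ∈ Finset.univ) =>
        grad_ineq'' (convex_of_sc' hμ (hsc i)) (hdiff i) xstar u)
      rw [Finset.sum_add_distrib] at h3
      exact h3
    rw [hT] at hsum1
    have h2 : (m:ℝ) * g - ∑ i, ∑ j, gradf i xstar j * (u j - xstar j) ≤ (m:ℝ) * s := by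
      linarith [hsum1]
    have hinv : (1/(m:ℝ)) * (m:ℝ) = 1 := by field_simp
    have hpos : (0:ℝ) ≤ 1/(m:ℝ) := by positivity
    have h3 := mul_le_mul_of_nonneg_left hgrad hpos
    have h4 := mul_le_mul_of_nonneg_left h2 hpos
    rw [mul_add] at h3
    rw [mul_sub, ← mul_assoc, hinv, one_mul, ← mul_assoc, hinv, one_mul] at h4
    linarith [h3, h4]
end

section
/- Suppose (X*, Z*, Y*) ∈ (ℝ^{m×d})³ with 1_mᵀ Y* = 0 is a fixed point of the iteration, i.e. X* is the unique minimizer of Y ↦ g(Y) + (1/(2γ))‖Y − Z*‖²_F, Z* = A X* − γ B ∇f(X*) − Y*, and Y* = Y* + C Z*. Then X* ∈ S_Fix: C X* = 0, and there exists V ∈ ℝ^{m×d} whose i-th row v_i is a subgradient of G at the i-th row x*_i of X* (G(u) ≥ G(x*_i) + ⟨v_i, u − x*_i⟩ for all u) such that 1_mᵀ(I − A)X* + γ 1_mᵀ B ∇f(X*) = −γ 1_mᵀ V. -/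
open Matrix

private lemma coe_sum_ereal {α : Type*} (s : Finset α) (f : α → ℝ) :
    ((∑ a ∈ s, f a : ℝ) : EReal) = ∑ a ∈ s, (f a : EReal) := by
  induction s using Finset.cons_induction with
  | empty => simp
  | cons a s ha ih => rw [Finset.sum_cons, Finset.sum_cons, EReal.coe_add, ih]

private lemma sum_ne_bot_ereal {α : Type*} (s : Finset α) (f : α → EReal)
    (h : ∀ a ∈ s, f a ≠ ⊥) : ∑ a ∈ s, f a ≠ ⊥ := by
  induction s using Finset.cons_induction with
  | empty => simp
  | cons a s ha ih =>
    rw [Finset.sum_cons]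
    intro hb
    rcases EReal.add_eq_bot_iff.mp hb with h1 | h2
    · exact h a (Finset.mem_cons_self a s) h1
    · exact ih (fun b hb => h b (Finset.mem_cons_of_mem hb)) h2

private lemma key_subgrad {d : ℕ} (G : (Fin d → ℝ) → EReal) (hGp : GProper G)
    (hGc : ERealConvexOn G) (γ : ℝ) (hγ : 0 < γ) (x z : Fin d → ℝ) (r : ℝ)
    (hGx : G x = (r : EReal))
    (h : ∀ u, ((r + 1/(2*γ) * ∑ j, (x j - z j)^2 : ℝ) : EReal)
        ≤ G u + ((1/(2*γ) * ∑ j, (u j - z j)^2 : ℝ) : EReal)) :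
    IsSubgradAt G (fun j => γ⁻¹ * (z j - x j)) x := by
  intro u
  rcases eq_or_ne (G u) ⊤ with hu | hu
  · rw [hu]; exact le_top
  have hub := hGp.1 u
  set ru := (G u).toReal with hru
  have hGu : G u = (ru : EReal) := (EReal.coe_toReal hu hub).symm
  have main : r + ∑ j, (γ⁻¹ * (z j - x j)) * (u j - x j) ≤ ru := by
    set c := 1/(2*γ) with hc_def
    have hc : 0 < c := by positivity
    set S := ∑ j, (z j - x j) * (u j - x j) with hS_def
    set W := ∑ j, (u j - x j)^2 with hW_def
    have hW : (0:ℝ) ≤ W := Finset.sum_nonneg fun j _ => sq_nonneg _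
    have hSsum : ∑ j, (γ⁻¹ * (z j - x j)) * (u j - x j) = γ⁻¹ * S := by
      rw [hS_def, Finset.mul_sum]; exact Finset.sum_congr rfl fun j _ => by ring
    rw [hSsum]
    have step : ∀ t : ℝ, 0 < t → t ≤ 1 → r + γ⁻¹ * S ≤ ru + t * (c * W) := by
      intro t ht ht1
      set y := (1-t) • x + t • u with hy_def
      have hconv := hGc x u (1-t) t (by linarith) ht.le (by ring)
      rw [hGx, hGu, ← EReal.coe_mul, ← EReal.coe_mul, ← EReal.coe_add] at hconv
      have hybot := hGp.1 y
      have hytop : G y ≠ ⊤ := by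
        intro hT; rw [hT] at hconv; exact (EReal.coe_lt_top _).not_ge hconv
      set s := (G y).toReal with hs_def
      have hGy : G y = (s : EReal) := (EReal.coe_toReal hytop hybot).symm
      have hs : s ≤ (1-t)*r + t*ru := by
        rw [hGy] at hconv; exact EReal.coe_le_coe_iff.mp hconv
      have hq : ∑ j, (y j - z j)^2 = (∑ j, (x j - z j)^2) - 2*t*S + t^2*W := by
        have h1 : ∀ j, (y j - z j)^2
            = (x j - z j)^2 - 2*t*((z j - x j) * (u j - x j)) + t^2*((u j - x j)^2) := by
          intro j
          have : y j = (1-t) * x j + t * u j := rfl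
          rw [this]; ring
        rw [Finset.sum_congr rfl fun j _ => h1 j, Finset.sum_add_distrib,
          Finset.sum_sub_distrib, ← Finset.mul_sum, ← Finset.mul_sum, ← hS_def, ← hW_def]
      have hy := h y
      rw [hGy, ← EReal.coe_add] at hy
      have hreal : r + c * ∑ j, (x j - z j)^2 ≤ s + c * ∑ j, (y j - z j)^2 :=
        EReal.coe_le_coe_iff.mp hy
      rw [hq] at hreal
      have h2c : γ⁻¹ = 2*c := by rw [hc_def]; field_simp
      have key2 : t * (r + γ⁻¹ * S) ≤ t * (ru + t * (c * W)) := by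
        rw [h2c]; nlinarith [hreal, hs]
      exact le_of_mul_le_mul_left key2 ht
    by_contra hlt
    push_neg at hlt
    set ε := (r + γ⁻¹ * S - ru)/2 with hε_def
    have hε : 0 < ε := by rw [hε_def]; linarith
    set t := min 1 (ε / (c*W + 1)) with ht_def
    have ht0 : 0 < t := lt_min one_pos (by positivity)
    have ht1 : t ≤ 1 := min_le_left _ _
    have htε : t * (c*W) ≤ ε := by
      have h1 : t ≤ ε / (c*W + 1) := min_le_right _ _
      have h2 : (ε / (c*W + 1)) * (c*W + 1) = ε := by field_simp
      nlinarith [mul_nonneg hc.le hW]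
    have := step t ht0 ht1
    linarith
  rw [hGx, hGu, ← EReal.coe_add]
  exact EReal.coe_le_coe_iff.mpr main


set_option maxHeartbeats 1000000 in
/-- any fixed point of the iteration belongs to `S_Fix`. -/
theorem stmt_2 {m d : ℕ} (μ L γ : ℝ) (hμ : 0 < μ) (hμL : μ ≤ L) (hγ : 0 < γ)
    (f : Fin m → (Fin d → ℝ) → ℝ) (gradf : Fin m → (Fin d → ℝ) → (Fin d → ℝ))
    (hdiff : ∀ i x, HasFDerivAt (f i) (dotCLM (gradf i x)) x)
    (hsc : ∀ i, ConvexOn ℝ Set.univ fun x => f i x - μ / 2 * vecNormSq x)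
    (hsmooth : ∀ i x y, vecNormSq (gradf i x - gradf i y) ≤ L ^ 2 * vecNormSq (x - y))
    (G : (Fin d → ℝ) → EReal) (hGp : GProper G) (hGc : ERealConvexOn G)
    (hGl : LowerSemicontinuous G)
    (A B C : Matrix (Fin m) (Fin m) ℝ) (hC : C.PosSemidef)
    (hnull : ∀ z : Fin m → ℝ, C *ᵥ z = 0 ↔ ∃ c : ℝ, z = fun _ => c)
    (Xs Zs Ys : Matrix (Fin m) (Fin d) ℝ)
    (hYs : onesV m ᵥ* Ys = 0)
    (hXs : IsProx G γ Zs Xs)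
    (hZs : Zs = A * Xs - γ • (B * gradMat gradf Xs) - Ys)
    (hfix : Ys = Ys + C * Zs) :
    C * Xs = 0 ∧
      ∃ V : Matrix (Fin m) (Fin d) ℝ,
        (∀ i : Fin m, IsSubgradAt G (V i) (Xs i)) ∧
        onesV m ᵥ* ((1 - A) * Xs) + γ • (onesV m ᵥ* (B * gradMat gradf Xs)) =
          -(γ • (onesV m ᵥ* V)) := by

  classical
  have hmin := hXs.1
  have hCZ : C * Zs = 0 := left_eq_add.mp hfix
  have hZrow : ∀ i i' j, Zs i j = Zs i' j := by
    intro i i' j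
    obtain ⟨c, hc⟩ := (hnull fun k => Zs k j).mp (by
      funext k
      have h0 := congrFun (congrFun hCZ k) j
      simpa [Matrix.mul_apply, Matrix.mulVec, dotProduct] using h0)
    rw [show Zs i j = (fun k => Zs k j) i from rfl, hc]
    rw [show Zs i' j = (fun k => Zs k j) i' from rfl, hc]
  have hXrow : ∀ i i', Xs i = Xs i' := by
    intro i i'
    set σ := Equiv.swap i i' with hσ
    set Xσ : Matrix (Fin m) (Fin d) ℝ := Matrix.of fun k j => Xs (σ k) j with hXσ
    have hg : gSum G Xσ = gSum G Xs := by
      unfold gSum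
      exact Equiv.sum_comp σ fun k => G (Xs k)
    have hf : frobSq (Xσ - Zs) = frobSq (Xs - Zs) := by
      unfold frobSq
      calc ∑ k, ∑ j, ((Xσ - Zs) k j)^2
          = ∑ k, ∑ j, ((Xs - Zs) (σ k) j)^2 := by
            refine Finset.sum_congr rfl fun k _ => Finset.sum_congr rfl fun j _ => ?_
            simp only [Matrix.sub_apply]
            rw [show Xσ k j = Xs (σ k) j from rfl, hZrow k (σ k) j]
        _ = ∑ k, ∑ j, ((Xs - Zs) k j)^2 := Equiv.sum_comp σ (fun k => ∑ j, ((Xs - Zs) k j)^2)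
    have he : proxObj G γ Zs Xσ = proxObj G γ Zs Xs := by
      unfold proxObj; rw [hg, hf]
    have hXσeq : Xσ = Xs := hXs.2 Xσ (fun Y => he ▸ hmin Y)
    have h2 : Xs i' = Xs i := by
      have h3 : Xσ i = Xs i := congrFun hXσeq i
      rwa [show Xσ i = Xs (σ i) from rfl, hσ, Equiv.swap_apply_left] at h3
    exact h2.symm
  have hCX : C * Xs = 0 := by
    ext i j
    have hcol : (C *ᵥ fun k => Xs k j) = 0 :=
      (hnull _).mpr ⟨Xs i j, funext fun k => congrFun (hXrow k i) j⟩
    have h0 := congrFun hcol i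
    simpa [Matrix.mul_apply, Matrix.mulVec, dotProduct] using h0
  obtain ⟨x₀, hx₀⟩ := hGp.2
  have hXfin : ∀ k, G (Xs k) ≠ ⊤ := by
    intro k hk
    have hrhs : proxObj G γ Zs (consMat m x₀) ≠ ⊤ := by
      unfold proxObj gSum
      have e : ∀ i : Fin m, G (consMat m x₀ i) = (((G x₀).toReal : ℝ) : EReal) := by
        intro i
        rw [show (consMat m x₀) i = x₀ from rfl]
        exact (EReal.coe_toReal hx₀ (hGp.1 x₀)).symm
      rw [Finset.sum_congr rfl fun i _ => e i, ← coe_sum_ereal, ← EReal.coe_add]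
      exact EReal.coe_ne_top _
    apply hrhs
    have hsum : gSum G Xs = ⊤ := by
      unfold gSum
      rw [← Finset.add_sum_erase _ _ (Finset.mem_univ k), hk]
      exact EReal.top_add_of_ne_bot
        (sum_ne_bot_ereal _ _ fun a _ => hGp.1 (Xs a))
    have hXtop : proxObj G γ Zs Xs = ⊤ := by
      unfold proxObj; rw [hsum]; exact EReal.top_add_of_ne_bot (EReal.coe_ne_bot _)
    exact top_le_iff.mp (hXtop ▸ hmin (consMat m x₀))
  set r : Fin m → ℝ := fun k => (G (Xs k)).toReal with hr_def
  have hGr : ∀ k, G (Xs k) = ((r k : ℝ) : EReal) := fun k =>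
    (EReal.coe_toReal (hXfin k) (hGp.1 (Xs k))).symm
  have hrow : ∀ i u, ((r i + 1/(2*γ) * ∑ j, (Xs i j - Zs i j)^2 : ℝ) : EReal)
      ≤ G u + ((1/(2*γ) * ∑ j, (u j - Zs i j)^2 : ℝ) : EReal) := by
    intro i u
    set R' : ℝ := ∑ k ∈ Finset.univ.erase i, r k with hR'
    set F' : ℝ := ∑ k ∈ Finset.univ.erase i, ∑ j, (Xs k j - Zs k j)^2 with hF'
    have hK := EReal.addLECancellable_coe (R' + 1/(2*γ) * F')
    rw [← hK.add_le_add_iff_right]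
    have lhs_eq : proxObj G γ Zs Xs
        = (((r i + 1/(2*γ) * ∑ j, (Xs i j - Zs i j)^2)
            + (R' + 1/(2*γ) * F') : ℝ) : EReal) := by
      unfold proxObj gSum frobSq
      have e1 : ∑ k, G (Xs k) = ((∑ k, r k : ℝ) : EReal) := by
        rw [coe_sum_ereal]; exact Finset.sum_congr rfl fun k _ => hGr k
      have e2 : ∑ k, r k = r i + R' := (Finset.add_sum_erase _ _ (Finset.mem_univ i)).symm
      have e3 : ∑ k, ∑ j, ((Xs - Zs) k j)^2 = (∑ j, (Xs i j - Zs i j)^2) + F' := by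
        simp only [Matrix.sub_apply]
        rw [hF', ← Finset.add_sum_erase _ (fun k => ∑ j, (Xs k j - Zs k j)^2)
          (Finset.mem_univ i)]
      rw [e1, e2, e3, ← EReal.coe_add]
      exact congrArg (fun t : ℝ => (t : EReal)) (by ring)
    have rhs_eq : proxObj G γ Zs (Xs.updateRow i u)
        = (G u + ((1/(2*γ) * ∑ j, (u j - Zs i j)^2 : ℝ) : EReal))
          + ((R' + 1/(2*γ) * F' : ℝ) : EReal) := by
      unfold proxObj gSum frobSq
      have e1 : ∑ k, G (Xs.updateRow i u k) = G u + ((R' : ℝ) : EReal) := by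
        rw [← Finset.add_sum_erase _ _ (Finset.mem_univ i), Matrix.updateRow_self]
        congr 1
        rw [hR', coe_sum_ereal]
        refine Finset.sum_congr rfl fun k hk => ?_
        rw [Matrix.updateRow_ne (Finset.ne_of_mem_erase hk), hGr k]
      have e2 : ∑ k, ∑ j, ((Xs.updateRow i u - Zs) k j)^2
          = (∑ j, (u j - Zs i j)^2) + F' := by
        rw [← Finset.add_sum_erase _
          (fun k => ∑ j, ((Xs.updateRow i u - Zs) k j)^2) (Finset.mem_univ i)]
        congr 1
        · exact Finset.sum_congr rfl fun j _ => by
            simp [Matrix.sub_apply, Matrix.updateRow_self]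
        · rw [hF']
          refine Finset.sum_congr rfl fun k hk => Finset.sum_congr rfl fun j _ => ?_
          simp [Matrix.sub_apply, Matrix.updateRow_ne (Finset.ne_of_mem_erase hk)]
      rw [e1, e2]
      have e4 : (1/(2*γ) * ((∑ j, (u j - Zs i j)^2) + F') : ℝ)
          = 1/(2*γ) * ∑ j, (u j - Zs i j)^2 + 1/(2*γ) * F' := by ring
      rw [e4, EReal.coe_add, EReal.coe_add]
      abel
    rw [← EReal.coe_add, ← lhs_eq, ← rhs_eq]
    exact hmin (Xs.updateRow i u)
  refine ⟨hCX, γ⁻¹ • (Zs - Xs), fun i => ?_, ?_⟩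
  · have hk := key_subgrad G hGp hGc γ hγ (Xs i) (Zs i) (r i) (hGr i) (hrow i)
    have hVi : (γ⁻¹ • (Zs - Xs)) i = fun j => γ⁻¹ * (Zs i j - Xs i j) :=
      funext fun j => by simp [Matrix.smul_apply, Matrix.sub_apply]
    rw [show ((γ⁻¹ • (Zs - Xs)) : Matrix (Fin m) (Fin d) ℝ) i
      = fun j => γ⁻¹ * (Zs i j - Xs i j) from hVi]
    exact hk
  · have e1 : (1 - A) * Xs = Xs - A * Xs := by rw [Matrix.sub_mul, Matrix.one_mul]
    have e2 : onesV m ᵥ* (γ⁻¹ • (Zs - Xs))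
        = γ⁻¹ • (onesV m ᵥ* Zs - onesV m ᵥ* Xs) := by
      funext j
      simp only [Matrix.vecMul, dotProduct, Matrix.smul_apply, Matrix.sub_apply,
        Pi.smul_apply, Pi.sub_apply, smul_eq_mul, mul_sub, Finset.sum_sub_distrib,
        Finset.mul_sum]
      congr 1 <;> exact Finset.sum_congr rfl fun k _ => by ring
    have e3 : onesV m ᵥ* (γ • (B * gradMat gradf Xs))
        = γ • (onesV m ᵥ* (B * gradMat gradf Xs)) := by
      funext j
      simp only [Matrix.vecMul, dotProduct, Matrix.smul_apply, Pi.smul_apply,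
        smul_eq_mul, Finset.mul_sum]
      exact Finset.sum_congr rfl fun k _ => by ring
    rw [e1, e2, hZs, Matrix.vecMul_sub, Matrix.vecMul_sub, Matrix.vecMul_sub, hYs, e3,
      smul_smul, mul_inv_cancel₀ hγ.ne', one_smul]
    funext j
    simp only [Pi.add_apply, Pi.sub_apply, Pi.smul_apply, Pi.neg_apply, Pi.zero_apply,
      smul_eq_mul]
    ring
end

section
/- Let 0 < μ ≤ L and let a ≤ b be real numbers with μ a ≤ L b. Define q(γ) = max(|a − γL|, |b − γμ|) for γ ∈ ℝ. Then q(γ) ≥ (L b − μ a)/(L + μ) for every γ ∈ ℝ, and equality holds at γ* = (a + b)/(L + μ); i.e., γ* is a global minimizer of q with optimal value q* = (L b − μ a)/(L + μ). (With a = λ_min(D), b = λ_max(D), this identifies the optimal step-size γ* = (λ_max(D)+λ_min(D))/(L+μ) and optimal contraction factor q* = (L λ_max(D) − μ λ_min(D))/(L+μ) in Theorem 3.) -/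
open Matrix

/-- the optimal step-size and optimal contraction factor. -/
theorem stmt_6 (μ L a b : ℝ) (hμ : 0 < μ) (hμL : μ ≤ L) (hab : a ≤ b)
    (h : μ * a ≤ L * b) :
    (∀ γ : ℝ, (L * b - μ * a) / (L + μ) ≤ max |a - γ * L| |b - γ * μ|) ∧
      max |a - ((a + b) / (L + μ)) * L| |b - ((a + b) / (L + μ)) * μ| =
        (L * b - μ * a) / (L + μ) := by
  have hS : 0 < L + μ := by linarith
  constructor
  · intro γ
    have h1 : γ * L - a ≤ max |a - γ * L| |b - γ * μ| :=
      le_trans (by rw [abs_sub_comm]; exact le_abs_self _) (le_max_left _ _)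
    have h2 : b - γ * μ ≤ max |a - γ * L| |b - γ * μ| :=
      le_trans (le_abs_self _) (le_max_right _ _)
    rw [div_le_iff₀ hS]
    nlinarith [mul_le_mul_of_nonneg_left h1 hμ.le,
      mul_le_mul_of_nonneg_left h2 (le_trans hμ.le hμL)]
  · have e1 : a - ((a + b) / (L + μ)) * L = -((L * b - μ * a) / (L + μ)) := by
      field_simp; ring
    have e2 : b - ((a + b) / (L + μ)) * μ = (L * b - μ * a) / (L + μ) := by
      field_simp; ring
    have hq : 0 ≤ (L * b - μ * a) / (L + μ) := div_nonneg (by linarith) hS.le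
    rw [e1, e2, abs_neg, abs_of_nonneg hq, max_self]
end

section
/- Let W ∈ ℝ^{m×m} be symmetric with W 1_m = 1_m, −I ≺ W ⪯ I, and null space of I − W equal to span(1_m), and let 0 < μ < L. Then the choice A = B = (I + W)/2, C = (I − W)/2, D = I (the NIDS/Exact-Diffusion parameters) satisfies: (i) Assumption 2: C is symmetric positive semidefinite with null space exactly span(1_m); (ii) Assumption 3: 1ᵀ A 1 = m and 1ᵀ B = 1ᵀ; (iii) Assumption 4: A = B D with D = I symmetric, −I ≺ D ⪯ I, B symmetric, I − C ≻ 0, B C = C B, and (L − μ)² B² ≺ (L + μ)² (I − C); and moreover (iv) B² ⪯ I − C (the additional condition of Corollary 4). -/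
open Matrix

lemma psd_smul' {n : ℕ} {M : Matrix (Fin n) (Fin n) ℝ} (h : M.PosSemidef) {c : ℝ} (hc : 0 ≤ c) :
    (c • M).PosSemidef := by
  refine ⟨?_, fun x => ?_⟩
  · unfold Matrix.IsHermitian
    rw [conjTranspose_smul, h.1.eq]; simp
  · exact (h.smul hc).2 x

lemma pd_smul' {n : ℕ} {M : Matrix (Fin n) (Fin n) ℝ} (h : M.PosDef) {c : ℝ} (hc : 0 < c) :
    (c • M).PosDef := by
  refine ⟨?_, fun x hx => ?_⟩
  · unfold Matrix.IsHermitian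
    rw [conjTranspose_smul, h.1.eq]; simp
  · exact (h.smul hc).2 hx


/-- the NIDS/Exact-Diffusion parameters `A = B = (I+W)/2`, `C = (I−W)/2`,
`D = I` satisfy Assumptions 2, 3, 4 and the extra condition of Corollary 4. -/
theorem stmt_14 {m : ℕ} (W : Matrix (Fin m) (Fin m) ℝ) (μ L : ℝ)
    (hμ : 0 < μ) (hμL : μ < L)
    (hWsym : W.IsSymm) (hW1 : W *ᵥ onesV m = onesV m)
    (hWlb : ((1 : Matrix (Fin m) (Fin m) ℝ) + W).PosDef)
    (hWub : ((1 : Matrix (Fin m) (Fin m) ℝ) - W).PosSemidef)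
    (hWnull : ∀ z : Fin m → ℝ, ((1 : Matrix (Fin m) (Fin m) ℝ) - W) *ᵥ z = 0 ↔
      ∃ c : ℝ, z = fun _ => c) :
    -- (i) Assumption 2 for C = (I − W)/2
    (((2 : ℝ)⁻¹ • (1 - W) : Matrix (Fin m) (Fin m) ℝ).PosSemidef ∧
      (∀ z : Fin m → ℝ,
        ((2 : ℝ)⁻¹ • (1 - W) : Matrix (Fin m) (Fin m) ℝ) *ᵥ z = 0 ↔
          ∃ c : ℝ, z = fun _ => c)) ∧
    -- (ii) Assumption 3 for A = B = (I + W)/2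
    (onesV m ⬝ᵥ (((2 : ℝ)⁻¹ • (1 + W) : Matrix (Fin m) (Fin m) ℝ) *ᵥ onesV m) = (m : ℝ) ∧
      onesV m ᵥ* ((2 : ℝ)⁻¹ • (1 + W) : Matrix (Fin m) (Fin m) ℝ) = onesV m) ∧
    -- (iii) Assumption 4 with D = I
    (((2 : ℝ)⁻¹ • (1 + W) : Matrix (Fin m) (Fin m) ℝ) =
        ((2 : ℝ)⁻¹ • (1 + W)) * (1 : Matrix (Fin m) (Fin m) ℝ) ∧
      (1 : Matrix (Fin m) (Fin m) ℝ).IsSymm ∧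
      ((1 : Matrix (Fin m) (Fin m) ℝ) + 1).PosDef ∧
      ((1 : Matrix (Fin m) (Fin m) ℝ) - 1).PosSemidef ∧
      ((2 : ℝ)⁻¹ • (1 + W) : Matrix (Fin m) (Fin m) ℝ).IsSymm ∧
      ((1 : Matrix (Fin m) (Fin m) ℝ) - (2 : ℝ)⁻¹ • (1 - W)).PosDef ∧
      ((2 : ℝ)⁻¹ • (1 + W) : Matrix (Fin m) (Fin m) ℝ) * ((2 : ℝ)⁻¹ • (1 - W)) =
        ((2 : ℝ)⁻¹ • (1 - W)) * ((2 : ℝ)⁻¹ • (1 + W)) ∧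
      ((L + μ) ^ 2 • ((1 : Matrix (Fin m) (Fin m) ℝ) - (2 : ℝ)⁻¹ • (1 - W))
          - (L - μ) ^ 2 • ((2 : ℝ)⁻¹ • (1 + W) : Matrix (Fin m) (Fin m) ℝ) ^ 2).PosDef) ∧
    -- (iv) B² ⪯ I − C
    ((1 : Matrix (Fin m) (Fin m) ℝ) - (2 : ℝ)⁻¹ • (1 - W)
        - ((2 : ℝ)⁻¹ • (1 + W) : Matrix (Fin m) (Fin m) ℝ) ^ 2).PosSemidef := by
  have h1 : ((1 - W) * (1 + W) * (1 - W) : Matrix (Fin m) (Fin m) ℝ).PosSemidef := by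
    have := hWlb.posSemidef.conjTranspose_mul_mul_same (1 - W)
    rwa [hWub.1.eq] at this
  have h2 : ((1 + W) * (1 - W) * (1 + W) : Matrix (Fin m) (Fin m) ℝ).PosSemidef := by
    have := hWub.conjTranspose_mul_mul_same (1 + W)
    rwa [hWlb.1.eq] at this
  have hsum : ((1 - W) * (1 + W) * (1 - W) + (1 + W) * (1 - W) * (1 + W) : Matrix (Fin m) (Fin m) ℝ)
      = (1 - W) * (1 + W) + (1 - W) * (1 + W) := by noncomm_ring
  have key : ((1 - W) * (1 + W) : Matrix (Fin m) (Fin m) ℝ)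
      = (2⁻¹ : ℝ) • ((1 - W) * (1 + W) * (1 - W) + (1 + W) * (1 - W) * (1 + W)) := by
    rw [hsum, ← two_smul ℝ, smul_smul]; norm_num
  have hPQ : ((1 - W) * (1 + W) : Matrix (Fin m) (Fin m) ℝ).PosSemidef := by
    rw [key]; exact psd_smul' (h1.add h2) (by norm_num)
  have hprod : ((1 - W) * (1 + W) : Matrix (Fin m) (Fin m) ℝ) = 1 - W * W := by noncomm_ring
  have hsq : ((1 + W) * (1 + W) : Matrix (Fin m) (Fin m) ℝ) = 1 + W + W + W * W := by noncomm_ring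
  have hAsym : ((2 : ℝ)⁻¹ • (1 + W) : Matrix (Fin m) (Fin m) ℝ).IsSymm := by
    unfold Matrix.IsSymm
    rw [transpose_smul, transpose_add, transpose_one, hWsym.eq]
  have hA1 : ((2 : ℝ)⁻¹ • (1 + W) : Matrix (Fin m) (Fin m) ℝ) *ᵥ onesV m = onesV m := by
    rw [smul_mulVec, add_mulVec, one_mulVec, hW1]
    funext i
    simp [onesV]
    norm_num
  refine ⟨⟨psd_smul' hWub (by norm_num), fun z => ?_⟩, ⟨?_, ?_⟩,
    ⟨(mul_one _).symm, isSymm_one, ?_, ?_, hAsym, ?_, ?_, ?_⟩, ?_⟩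
  · rw [smul_mulVec, smul_eq_zero]
    simp only [inv_eq_zero, OfNat.ofNat_ne_zero, false_or]
    exact hWnull z
  · rw [hA1]; simp [onesV, dotProduct]
  · rw [← mulVec_transpose, hAsym.eq, hA1]
  · exact Matrix.PosDef.add Matrix.PosDef.one Matrix.PosDef.one
  · rw [sub_self]; exact Matrix.PosSemidef.zero
  · have e : ((1 : Matrix (Fin m) (Fin m) ℝ) - (2 : ℝ)⁻¹ • (1 - W)) = (2 : ℝ)⁻¹ • (1 + W) := by
      module
    rw [e]; exact pd_smul' hWlb (by norm_num)
  · rw [Matrix.smul_mul, Matrix.mul_smul, Matrix.smul_mul, Matrix.mul_smul, smul_smul, smul_smul]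
    congr 1
    noncomm_ring
  · have e : ((L + μ) ^ 2 • ((1 : Matrix (Fin m) (Fin m) ℝ) - (2 : ℝ)⁻¹ • (1 - W))
          - (L - μ) ^ 2 • ((2 : ℝ)⁻¹ • (1 + W) : Matrix (Fin m) (Fin m) ℝ) ^ 2)
        = ((L - μ) ^ 2 / 4) • ((1 - W) * (1 + W))
          + (((L + μ) ^ 2 - (L - μ) ^ 2) / 2) • ((1 : Matrix (Fin m) (Fin m) ℝ) + W) := by
      rw [pow_two ((2 : ℝ)⁻¹ • (1 + W) : Matrix (Fin m) (Fin m) ℝ), Matrix.smul_mul, Matrix.mul_smul, smul_smul, hsq, hprod]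
      module
    rw [e]
    refine Matrix.PosDef.posSemidef_add (psd_smul' hPQ (by positivity)) (pd_smul' hWlb ?_)
    have : (L + μ) ^ 2 - (L - μ) ^ 2 = 4 * (L * μ) := by ring
    rw [this]
    have hL : 0 < L := hμ.trans hμL
    positivity
  · have e : ((1 : Matrix (Fin m) (Fin m) ℝ) - (2 : ℝ)⁻¹ • (1 - W)
        - ((2 : ℝ)⁻¹ • (1 + W) : Matrix (Fin m) (Fin m) ℝ) ^ 2)
        = (4⁻¹ : ℝ) • ((1 - W) * (1 + W)) := by
      rw [pow_two ((2 : ℝ)⁻¹ • (1 + W) : Matrix (Fin m) (Fin m) ℝ), Matrix.smul_mul, Matrix.mul_smul, smul_smul, hsq, hprod]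
      module
    rw [e]
    exact psd_smul' hPQ (by norm_num)
end

section
/- (Lemma 5, transformation identity.) Suppose A = B D with B, C, D ∈ ℝ^{m×m}, B and C symmetric, B C = C B, and C positive semidefinite with PSD square root √C. Let {(X^k, Z^k, Y^k)}_{k≥0} be generated by X^k = prox_{γg}(Z^k), Z^{k+1} = A X^k − γ B ∇f(X^k) − Y^k, Y^{k+1} = Y^k + C Z^{k+1}, from Z⁰ ∈ ℝ^{m×d} and Y⁰ = 0. Define Ũ^1 = (Z̃^1, W̃^1) with Z̃^1 = D X⁰ − γ ∇f(X⁰) and W̃^1 = √C Z̃^1, and Ũ^{k+1} = T(Ũ^k) for k ≥ 1, where T(Z, W) = (P − √C W, √C P + (I − C) W) with P = D·prox_{γg}(B Z) − γ ∇f(prox_{γg}(B Z)). Then for every k ≥ 1: Z^k = B Z̃^k and Y^k = B √C W̃^k, where Ũ^k = (Z̃^k, W̃^k). -/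
open Matrix

/-- The old Mathlib `Matrix.PosSemidef.sqrt` (removed since), with its original definition. -/
noncomputable def psdSqrt {n 𝕜 : Type*} [Fintype n] [DecidableEq n] [RCLike 𝕜]
    [PartialOrder 𝕜] [StarOrderedRing 𝕜]
    {A : Matrix n n 𝕜} (hA : A.PosSemidef) : Matrix n n 𝕜 :=
  (hA.1.eigenvectorUnitary : Matrix n n 𝕜) * diagonal ((↑) ∘ (√·) ∘ hA.1.eigenvalues) *
  (star hA.1.eigenvectorUnitary : Matrix n n 𝕜)

theorem psdSqrt_mul_self_real {m : ℕ} {C : Matrix (Fin m) (Fin m) ℝ} (hC : C.PosSemidef) :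
    psdSqrt hC * psdSqrt hC = C := by
  unfold psdSqrt
  have hU : (star hC.1.eigenvectorUnitary : Matrix (Fin m) (Fin m) ℝ) *
      (hC.1.eigenvectorUnitary : Matrix (Fin m) (Fin m) ℝ) = 1 :=
    Unitary.coe_star_mul_self _
  have hD : diagonal ((RCLike.ofReal ∘ (√·) ∘ hC.1.eigenvalues) : Fin m → ℝ) *
      diagonal ((RCLike.ofReal ∘ (√·) ∘ hC.1.eigenvalues) : Fin m → ℝ) =
      diagonal (RCLike.ofReal ∘ hC.1.eigenvalues) := by
    rw [diagonal_mul_diagonal]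
    congr 1
    funext i
    simp [Real.mul_self_sqrt (hC.eigenvalues_nonneg i)]
  conv_rhs => rw [hC.1.spectral_theorem, Unitary.conjStarAlgAut_apply]
  rw [← hD]
  simp only [Matrix.mul_assoc]
  rw [← Matrix.mul_assoc (star _ : Matrix (Fin m) (Fin m) ℝ) (hC.1.eigenvectorUnitary : Matrix (Fin m) (Fin m) ℝ), hU, Matrix.one_mul]

/-- Lemma 5: the transformation identity relating the iterates to the
fixed-point iteration of `T`. -/
theorem stmt_15 {m d : ℕ} (μ L γ : ℝ) (hμ : 0 < μ) (hμL : μ ≤ L) (hγ : 0 < γ)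
    (f : Fin m → (Fin d → ℝ) → ℝ) (gradf : Fin m → (Fin d → ℝ) → (Fin d → ℝ))
    (hdiff : ∀ i x, HasFDerivAt (f i) (dotCLM (gradf i x)) x)
    (hsc : ∀ i, ConvexOn ℝ Set.univ fun x => f i x - μ / 2 * vecNormSq x)
    (hsmooth : ∀ i x y, vecNormSq (gradf i x - gradf i y) ≤ L ^ 2 * vecNormSq (x - y))
    (G : (Fin d → ℝ) → EReal) (hGp : GProper G) (hGc : ERealConvexOn G)
    (hGl : LowerSemicontinuous G)
    (A B C D : Matrix (Fin m) (Fin m) ℝ)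
    (hC : C.PosSemidef) (hBsym : B.IsSymm) (hBC : B * C = C * B)
    (hABD : A = B * D)
    -- the proximal operator of γ g
    (prox : Matrix (Fin m) (Fin d) ℝ → Matrix (Fin m) (Fin d) ℝ)
    (hprox : ∀ Z, IsProx G γ Z (prox Z))
    -- the iterates, started from Y⁰ = 0
    (X Z Y : ℕ → Matrix (Fin m) (Fin d) ℝ)
    (hXit : ∀ k, X k = prox (Z k))
    (hZit : ∀ k, Z (k + 1) = A * X k - γ • (B * gradMat gradf (X k)) - Y k)
    (hYit : ∀ k, Y (k + 1) = Y k + C * Z (k + 1))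
    (hY0 : Y 0 = 0)
    -- the transformed sequence Ũ^k = (Z̃^k, W̃^k)
    (Zt Wt : ℕ → Matrix (Fin m) (Fin d) ℝ)
    (hZt1 : Zt 1 = D * X 0 - γ • gradMat gradf (X 0))
    (hWt1 : Wt 1 = psdSqrt hC * Zt 1)
    (hrec : ∀ k, 1 ≤ k →
      Zt (k + 1) = (D * prox (B * Zt k) - γ • gradMat gradf (prox (B * Zt k)))
          - psdSqrt hC * Wt k ∧
      Wt (k + 1) = psdSqrt hC * (D * prox (B * Zt k) - γ • gradMat gradf (prox (B * Zt k)))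
          + (1 - C) * Wt k) :
    ∀ k, 1 ≤ k → Z k = B * Zt k ∧ Y k = B * (psdSqrt hC * Wt k) := by
  obtain ⟨S, hS1, hsq⟩ : ∃ S, S = psdSqrt hC ∧ S * S = C :=
    ⟨psdSqrt hC, rfl, psdSqrt_mul_self_real hC⟩
  rw [← hS1] at hWt1 hrec ⊢
  have key : ∀ M : Matrix (Fin m) (Fin d) ℝ,
      B * (S * (S * M)) = C * (B * M) := by
    intro M
    rw [← Matrix.mul_assoc S, hsq, ← Matrix.mul_assoc, hBC, Matrix.mul_assoc]
  have key2 : ∀ M : Matrix (Fin m) (Fin d) ℝ,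
      B * (S * (C * M)) = C * (B * (S * M)) := by
    intro M
    have hCs : S * C = C * S := by
      rw [← hsq, Matrix.mul_assoc]
    rw [← Matrix.mul_assoc S, hCs, Matrix.mul_assoc C, ← Matrix.mul_assoc B,
      hBC, Matrix.mul_assoc]
  intro k hk
  induction k, hk using Nat.le_induction with
  | base =>
    have hZ1 : Z 1 = B * Zt 1 := by
      rw [hZit 0, hY0, hABD, hZt1, Matrix.mul_sub, Matrix.mul_smul,
        Matrix.mul_assoc, sub_zero]
    refine ⟨hZ1, ?_⟩
    rw [hYit 0, hY0, zero_add, hZ1, hWt1, key]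
  | succ k hk ih =>
    obtain ⟨ihZ, ihY⟩ := ih
    obtain ⟨hZrec, hWrec⟩ := hrec k hk
    have hXk : X k = prox (B * Zt k) := by rw [hXit, ihZ]
    have hZ1 : Z (k + 1) = B * Zt (k + 1) := by
      rw [hZit k, hABD, ihY, hXk, hZrec]
      simp only [Matrix.mul_sub, Matrix.mul_smul, Matrix.mul_assoc]
    refine ⟨hZ1, ?_⟩
    have hP' : D * prox (B * Zt k) - γ • gradMat gradf (prox (B * Zt k))
        = Zt (k + 1) + S * Wt k := sub_eq_iff_eq_add.mp hZrec.symm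
    rw [hYit k, ihY, hZ1, hWrec, hP']
    simp only [Matrix.mul_add, Matrix.mul_sub, Matrix.sub_mul, Matrix.one_mul]
    rw [key, key, key2]
    abel
end
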